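/- Suppose the dangling correction holds. Then the stochastic solution of MPR x = α P x^{k-1} + (1−α)v is unique if and only if the nonnegative solution of MLPPR (e^Ty)^{k-2}y − αP̄y^{k-1} = v is unique. -/
import Mathlib

open Finset Real

noncomputable def contr {n m : ℕ} (P : Fin n → (Fin m → Fin n) → ℝ) (y : Fin n → ℝ) : Fin n → ℝ :=
  fun i => ∑ j : Fin m → Fin n, P i j * ∏ s, y (j s)

lemma contr_nonneg {n m : ℕ} {P : Fin n → (Fin m → Fin n) → ℝ} {y : Fin n → ℝ}
    (hP : ∀ i j, 0 ≤ P i j) (hy : ∀ i, 0 ≤ y i) (i : Fin n) : 0 ≤ contr P y i :=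
  Finset.sum_nonneg fun j _ => mul_nonneg (hP i j) (Finset.prod_nonneg fun _ _ => hy _)

lemma contr_smul {n m : ℕ} (P : Fin n → (Fin m → Fin n) → ℝ) (c : ℝ) (y : Fin n → ℝ) (i : Fin n) :
    contr P (fun l => c * y l) i = c ^ m * contr P y i := by
  unfold contr
  rw [Finset.mul_sum]
  refine Finset.sum_congr rfl fun j _ => ?_
  rw [Finset.prod_mul_distrib, Finset.prod_const, Finset.card_univ, Fintype.card_fin]
  ring

lemma sum_prod_pow {n m : ℕ} (x : Fin n → ℝ) :
    ∑ j : Fin m → Fin n, ∏ s, x (j s) = (∑ i, x i) ^ m := by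
  have h : (∑ i, x i) ^ m = ∏ _s : Fin m, ∑ i, x i := by
    rw [Finset.prod_const, Finset.card_univ, Fintype.card_fin]
  rw [h, Finset.prod_univ_sum]
  rw [Fintype.piFinset_univ]

lemma sum_contr {n m : ℕ} (P : Fin n → (Fin m → Fin n) → ℝ) (x : Fin n → ℝ) :
    ∑ i, contr P x i = ∑ j : Fin m → Fin n, (∑ i, P i j) * ∏ s, x (j s) := by
  unfold contr
  rw [Finset.sum_comm]
  exact Finset.sum_congr rfl fun j _ => by rw [Finset.sum_mul]

lemma contrP_expand {n m : ℕ} (Pb P : Fin n → (Fin m → Fin n) → ℝ) (v : Fin n → ℝ)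
    (hP : ∀ i j, P i j = Pb i j + v i * (1 - ∑ l, Pb l j)) (x : Fin n → ℝ) (i : Fin n) :
    contr P x i = contr Pb x i + v i * ((∑ l, x l) ^ m - ∑ l, contr Pb x l) := by
  rw [sum_contr, ← sum_prod_pow (m := m) x]
  unfold contr
  simp only [hP]
  rw [← Finset.sum_sub_distrib, Finset.mul_sum, ← Finset.sum_add_distrib]
  exact Finset.sum_congr rfl fun j _ => by ring

lemma exists_pow_eq' {m : ℕ} (hm : m ≠ 0) {a : ℝ} (ha : 0 < a) : ∃ t : ℝ, 0 < t ∧ t ^ m = a := by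
  refine ⟨a ^ ((m : ℝ)⁻¹), Real.rpow_pos_of_pos ha _, ?_⟩
  rw [← Real.rpow_natCast (a ^ ((m : ℝ)⁻¹)) m, ← Real.rpow_mul ha.le,
    inv_mul_cancel₀ (by exact_mod_cast hm), Real.rpow_one]

lemma pow_eq_one_pos {m : ℕ} {c : ℝ} (hc : 0 < c) (h : c ^ (m+1) = 1) : c = 1 := by
  rcases lt_trichotomy c 1 with h1 | h1 | h1
  · have := pow_lt_one₀ hc.le h1 (Nat.succ_ne_zero m)
    rw [h] at this; exact absurd this (lt_irrefl 1)
  · exact h1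
  · have := one_lt_pow₀ h1 (Nat.succ_ne_zero m)
    rw [h] at this; exact absurd this (lt_irrefl 1)

theorem mpr_unique_iff_mlppr_unique (n k : ℕ) (hn : 0 < n) (hk : 2 ≤ k)
    (Pb P : Fin n → (Fin (k-1) → Fin n) → ℝ)
    (hPb0 : ∀ i j, 0 ≤ Pb i j) (hPbs : ∀ j, ∑ i, Pb i j ≤ 1)
    (v : Fin n → ℝ) (hv0 : ∀ i, 0 ≤ v i) (hv1 : ∑ i, v i = 1)
    (hP : ∀ i j, P i j = Pb i j + v i * (1 - ∑ l, Pb l j))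
    (α : ℝ) (hα0 : 0 ≤ α) (hα1 : α < 1) :
    (∃! x : Fin n → ℝ, (∀ i, 0 ≤ x i) ∧ ∑ i, x i = 1 ∧
        ∀ i, x i = α * contr P x i + (1-α) * v i) ↔
    (∃! y : Fin n → ℝ, (∀ i, 0 ≤ y i) ∧
        ∀ i, (∑ l, y l) ^ (k-2) * y i - α * contr Pb y i = v i) := by
  obtain ⟨d, rfl⟩ : ∃ d, k = d + 2 := ⟨k - 2, by omega⟩
  show
    (∃! x : Fin n → ℝ, (∀ i, 0 ≤ x i) ∧ ∑ i, x i = 1 ∧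
        ∀ i, x i = α * contr (m := d+1) P x i + (1-α) * v i) ↔
    (∃! y : Fin n → ℝ, (∀ i, 0 ≤ y i) ∧
        ∀ i, (∑ l, y l) ^ d * y i - α * contr (m := d+1) Pb y i = v i)
  have hPexp : ∀ (x : Fin n → ℝ) (i : Fin n),
      contr (m := d+1) P x i
        = contr (m := d+1) Pb x i + v i * ((∑ l, x l) ^ (d+1) - ∑ l, contr (m := d+1) Pb x l) :=
    contrP_expand Pb P v hP
  -- Map A : an MLPPR solution normalizes to an MPR solution
  have mapA : ∀ y : Fin n → ℝ, (∀ i, 0 ≤ y i) →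
      (∀ i, (∑ l, y l) ^ d * y i - α * contr (m := d+1) Pb y i = v i) →
      0 < ∑ l, y l ∧
      ((∀ i, 0 ≤ (∑ l, y l)⁻¹ * y i) ∧ (∑ i, (∑ l, y l)⁻¹ * y i) = 1 ∧
        ∀ i, (∑ l, y l)⁻¹ * y i
          = α * contr (m := d+1) P (fun l => (∑ l, y l)⁻¹ * y l) i + (1-α) * v i) := by
    intro y hy0 hyeq
    have hσ0 : 0 ≤ ∑ l, y l := Finset.sum_nonneg fun l _ => hy0 l
    have hσ : 0 < ∑ l, y l := by
      rcases hσ0.lt_or_eq with h | h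
      · exact h
      · exfalso
        have hy : ∀ i, y i = 0 := fun i =>
          (Finset.sum_eq_zero_iff_of_nonneg (fun l _ => hy0 l)).1 h.symm i (Finset.mem_univ i)
        have hc : ∀ i, contr (m := d+1) Pb y i = 0 := by
          intro i
          refine Finset.sum_eq_zero fun j _ => ?_
          rw [Finset.prod_eq_zero (Finset.mem_univ (0 : Fin (d+1))) (hy _), mul_zero]
        have hvz : ∀ i, v i = 0 := by
          intro i
          have h' := hyeq i
          rw [hy i, hc i] at h'
          simpa using h'.symm
        rw [Finset.sum_congr rfl fun i _ => hvz i] at hv1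
        simp at hv1
    have hσne : (∑ l, y l) ≠ 0 := hσ.ne'
    have hsum : (∑ l, y l) ^ d * (∑ l, y l) - α * ∑ l, contr (m := d+1) Pb y l = 1 := by
      have h := Finset.sum_congr rfl (fun i (_ : i ∈ Finset.univ) => hyeq i)
      rw [hv1, Finset.sum_sub_distrib, ← Finset.mul_sum, ← Finset.mul_sum] at h
      exact h
    have hsx : (∑ l, (∑ l, y l)⁻¹ * y l) = 1 := by
      rw [← Finset.mul_sum, inv_mul_cancel₀ hσne]
    refine ⟨hσ, fun i => mul_nonneg (inv_nonneg.2 hσ0) (hy0 i), hsx, ?_⟩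
    intro i
    rw [hPexp]
    simp only [contr_smul]
    rw [hsx, one_pow, ← Finset.mul_sum, inv_pow]
    apply mul_left_cancel₀ (pow_ne_zero (d+1) hσne)
    have hw : (∑ l, y l) ^ (d+1) * ((∑ l, y l) ^ (d+1))⁻¹ = 1 :=
      mul_inv_cancel₀ (pow_ne_zero (d+1) hσne)
    have hw2 : (∑ l, y l) ^ (d+1) * (∑ l, y l)⁻¹ = (∑ l, y l) ^ d := by
      rw [pow_succ, mul_assoc, mul_inv_cancel₀ hσne, mul_one]
    linear_combination y i * hw2 - (α * contr (m := d+1) Pb y i) * hw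
      + (α * v i * ∑ l, contr (m := d+1) Pb y l) * hw + hyeq i - v i * hsum
  -- Map B : an MPR solution rescales to an MLPPR solution
  have mapB : ∀ x : Fin n → ℝ, (∀ i, 0 ≤ x i) → (∑ i, x i) = 1 →
      (∀ i, x i = α * contr (m := d+1) P x i + (1-α) * v i) →
      ∃ t : ℝ, 0 < t ∧ (∀ i, 0 ≤ t * x i) ∧
        (∀ i, (∑ l, t * x l) ^ d * (t * x i)
          - α * contr (m := d+1) Pb (fun l => t * x l) i = v i) := by
    intro x hx0 hx1 hxeq
    have hS0 : 0 ≤ ∑ l, contr (m := d+1) Pb x l :=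
      Finset.sum_nonneg fun l _ => contr_nonneg hPb0 hx0 l
    have hS1 : (∑ l, contr (m := d+1) Pb x l) ≤ 1 := by
      rw [sum_contr]
      calc ∑ j : Fin (d+1) → Fin n, (∑ i, Pb i j) * ∏ s, x (j s)
          ≤ ∑ j : Fin (d+1) → Fin n, 1 * ∏ s, x (j s) :=
            Finset.sum_le_sum fun j _ => mul_le_mul_of_nonneg_right (hPbs j)
              (Finset.prod_nonneg fun _ _ => hx0 _)
        _ = 1 := by simp only [one_mul]; rw [sum_prod_pow, hx1, one_pow]
    have hpos : 0 < 1 - α * ∑ l, contr (m := d+1) Pb x l := by nlinarith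
    obtain ⟨t, ht0, htm⟩ := exists_pow_eq' (Nat.succ_ne_zero d) (inv_pos.2 hpos)
    have key : t ^ (d+1) * (1 - α * ∑ l, contr (m := d+1) Pb x l) = 1 := by
      rw [htm, inv_mul_cancel₀ hpos.ne']
    refine ⟨t, ht0, fun i => mul_nonneg ht0.le (hx0 i), ?_⟩
    intro i
    rw [← Finset.mul_sum, hx1, mul_one, contr_smul]
    have hxi := hxeq i
    rw [hPexp x i, hx1, one_pow] at hxi
    linear_combination t^(d+1) * hxi + v i * key
  constructor
  · rintro ⟨x0, hx0, hxU⟩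
    obtain ⟨t0, ht0, hty0, htyeq⟩ := mapB x0 hx0.1 hx0.2.1 hx0.2.2
    refine ⟨fun i => t0 * x0 i, ⟨hty0, htyeq⟩, ?_⟩
    intro y hy
    obtain ⟨hyσ, hyx⟩ := mapA y hy.1 hy.2
    have e1 : (fun i => (∑ l, y l)⁻¹ * y i) = x0 := hxU _ hyx
    have hσne : (∑ l, y l) ≠ 0 := hyσ.ne'
    have hyi : ∀ i, y i = (∑ l, y l) * x0 i := by
      intro i
      rw [← congrFun e1 i, ← mul_assoc, mul_inv_cancel₀ hσne, one_mul]
    have h1 : ∀ i : Fin n, (∑ l, y l)^(d+1) * (x0 i - α * contr (m := d+1) Pb x0 i) = v i := by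
      intro i
      have h := hy.2 i
      rw [hyi i] at h
      have hcy : contr (m := d+1) Pb y i = (∑ l, y l)^(d+1) * contr (m := d+1) Pb x0 i := by
        calc contr (m := d+1) Pb y i
            = contr (m := d+1) Pb (fun l => (∑ l, y l) * x0 l) i :=
              congrFun (congrArg (contr Pb) (funext fun l => hyi l)) i
          _ = (∑ l, y l)^(d+1) * contr (m := d+1) Pb x0 i := contr_smul _ _ _ _
      rw [hcy] at h
      linear_combination h
    have h2 : ∀ i : Fin n, t0^(d+1) * (x0 i - α * contr (m := d+1) Pb x0 i) = v i := by
      intro i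
      have h := htyeq i
      rw [← Finset.mul_sum, hx0.2.1, mul_one, contr_smul] at h
      linear_combination h
    have hs1 : (∑ l, y l)^(d+1) * (∑ i, (x0 i - α * contr (m := d+1) Pb x0 i)) = 1 := by
      rw [Finset.mul_sum, ← hv1]
      exact Finset.sum_congr rfl fun i _ => h1 i
    have hs2 : t0^(d+1) * (∑ i, (x0 i - α * contr (m := d+1) Pb x0 i)) = 1 := by
      rw [Finset.mul_sum, ← hv1]
      exact Finset.sum_congr rfl fun i _ => h2 i
    have hB : (∑ i, (x0 i - α * contr (m := d+1) Pb x0 i)) ≠ 0 := by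
      intro h0
      rw [h0, mul_zero] at hs2
      exact one_ne_zero hs2.symm
    have hpe : (∑ l, y l)^(d+1) = t0^(d+1) := mul_right_cancel₀ hB (hs1.trans hs2.symm)
    have hσt : (∑ l, y l) = t0 := by
      have hc : ((∑ l, y l) * t0⁻¹)^(d+1) = 1 := by
        rw [mul_pow, hpe, ← mul_pow, mul_inv_cancel₀ ht0.ne', one_pow]
      have hc1 := pow_eq_one_pos (mul_pos hyσ (inv_pos.2 ht0)) hc
      field_simp at hc1
      exact hc1
    funext i
    show y i = t0 * x0 i
    rw [hyi i, hσt]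
  · rintro ⟨y0, hy0, hyU⟩
    obtain ⟨hσ0, hx0p⟩ := mapA y0 hy0.1 hy0.2
    refine ⟨fun i => (∑ l, y0 l)⁻¹ * y0 i, hx0p, ?_⟩
    intro x hx
    obtain ⟨t, ht0, hty, htyeq⟩ := mapB x hx.1 hx.2.1 hx.2.2
    have e : (fun i => t * x i) = y0 := hyU _ ⟨hty, htyeq⟩
    have hst : ∑ l, y0 l = t := by
      rw [← e, ← Finset.mul_sum, hx.2.1, mul_one]
    funext i
    show x i = (∑ l, y0 l)⁻¹ * y0 i
    have hyx : y0 i = t * x i := by rw [← e]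
    rw [hyx, hst, ← mul_assoc, inv_mul_cancel₀ ht0.ne', one_mul]
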